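/- (Greedy approximation guarantee for monotone submodular functions.) Let U be a finite type, f : Finset U → ℝ monotone and submodular with f(∅) = 0, and let OPT ⊆ U be a finite set with |OPT| = m ≥ 1. Let (S_k)_{k ≥ 0} be a greedy sequence: S_0 = ∅ and for each k, S_{k+1} = S_k ∪ {x_k} where x_k satisfies f(S_k ∪ {x_k}) − f(S_k) ≥ f(S_k ∪ {y}) − f(S_k) for all y ∈ U. Then the set S* = S_m produced after m greedy steps satisfies f(S*) ≥ (1 − 1/e) · f(OPT), where e is Euler's number. -/

import Mathlib

/-- Greedy approximation guarantee for monotone submodular functions: if `f` is monotone,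
submodular, and `f(∅) = 0`, `|OPT| = m ≥ 1`, and `(S k)` is a greedy sequence, then the set
`S* = S m` produced after `m` greedy steps satisfies `f(S*) ≥ (1 − 1/e) · f(OPT)`. -/
theorem submodular_greedy_approximation_guarantee
    {U : Type*} [Fintype U] [DecidableEq U] (f : Finset U → ℝ)
    (hmono : ∀ A B : Finset U, A ⊆ B → f A ≤ f B)
    (hsub : ∀ A B : Finset U, A ⊆ B → ∀ x ∉ B,
      f (B ∪ {x}) - f B ≤ f (A ∪ {x}) - f A)
    (hempty : f ∅ = 0)
    (OPT : Finset U) (m : ℕ) (hOPT : OPT.card = m) (hm : 1 ≤ m)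
    (S : ℕ → Finset U) (x : ℕ → U)
    (hS0 : S 0 = ∅)
    (hSsucc : ∀ k, S (k + 1) = S k ∪ {x k})
    (hgreedy : ∀ k, ∀ y : U, f (S k ∪ {y}) - f (S k) ≤ f (S k ∪ {x k}) - f (S k)) :
    (1 - 1 / Real.exp 1) * f OPT ≤ f (S m) := by
  have hm0 : (0:ℝ) < (m:ℝ) := by exact_mod_cast Nat.lt_of_lt_of_le Nat.zero_lt_one hm
  have hfO : 0 ≤ f OPT := by
    have := hmono ∅ OPT (Finset.empty_subset _); linarith [this, hempty.le]
  -- gains are nonnegative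
  have hg : ∀ k, 0 ≤ f (S (k+1)) - f (S k) := by
    intro k
    rw [hSsucc]
    linarith [hmono (S k) (S k ∪ {x k}) Finset.subset_union_left]
  -- telescoping by submodularity
  have tel : ∀ (A T : Finset U), f (A ∪ T) - f A ≤ ∑ y ∈ T, (f (A ∪ {y}) - f A) := by
    intro A T
    induction T using Finset.induction with
    | empty => simp
    | @insert a T' h ih =>
      rw [Finset.sum_insert h]
      by_cases ha : a ∈ A
      · have h1 : A ∪ insert a T' = A ∪ T' := by
          ext b; simp only [Finset.mem_union, Finset.mem_insert]
          constructor
          · rintro (hb | rfl | hb) <;> simp [*]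
          · rintro (hb | hb) <;> simp [*]
        have h2 : A ∪ {a} = A := by
          ext b; simp only [Finset.mem_union, Finset.mem_singleton]
          constructor
          · rintro (hb | rfl) <;> simp [*]
          · intro hb; simp [hb]
        rw [h1, h2]
        linarith
      · have hna : a ∉ A ∪ T' := by simp [ha, h]
        have hs := hsub A (A ∪ T') Finset.subset_union_left a hna
        have heq : (A ∪ T') ∪ {a} = A ∪ insert a T' := by
          rw [Finset.insert_eq]
          ext b
          simp only [Finset.mem_union, Finset.mem_singleton]
          tauto
        rw [heq] at hs
        linarith
  -- key inequality
  have key : ∀ k, f OPT - f (S k) ≤ (m:ℝ) * (f (S (k+1)) - f (S k)) := by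
    intro k
    have h1 : f OPT ≤ f (S k ∪ OPT) := hmono _ _ Finset.subset_union_right
    have h2 := tel (S k) OPT
    have h3 : ∑ y ∈ OPT, (f (S k ∪ {y}) - f (S k)) ≤
        ∑ _y ∈ OPT, (f (S k ∪ {x k}) - f (S k)) :=
      Finset.sum_le_sum fun y _ => hgreedy k y
    rw [Finset.sum_const, hOPT, nsmul_eq_mul] at h3
    rw [hSsucc]
    linarith
  -- recursion
  have hrec : ∀ k, f OPT - f (S k) ≤ (1 - 1/(m:ℝ))^k * f OPT := by
    intro k
    induction k with
    | zero => simp [hS0, hempty]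
    | succ k ih =>
      have hk := key k
      have hfac : (0:ℝ) ≤ 1 - 1/(m:ℝ) := by
        have h1 : (1:ℝ) ≤ (m:ℝ) := by exact_mod_cast hm
        have h01 : 1/(m:ℝ) ≤ 1 := by rw [div_le_one hm0]; exact h1
        linarith
      have step : f OPT - f (S (k+1)) ≤ (1 - 1/(m:ℝ)) * (f OPT - f (S k)) := by
        have hgk : (f OPT - f (S k)) / (m:ℝ) ≤ f (S (k+1)) - f (S k) := by
          rw [div_le_iff₀ hm0] at *
          nlinarith [key k]
        have : (1 - 1/(m:ℝ)) * (f OPT - f (S k))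
            = (f OPT - f (S k)) - (f OPT - f (S k)) / (m:ℝ) := by
          field_simp
        linarith
      calc f OPT - f (S (k+1)) ≤ (1 - 1/(m:ℝ)) * (f OPT - f (S k)) := step
        _ ≤ (1 - 1/(m:ℝ)) * ((1 - 1/(m:ℝ))^k * f OPT) := by
            exact mul_le_mul_of_nonneg_left ih hfac
        _ = (1 - 1/(m:ℝ))^(k+1) * f OPT := by ring
  -- (1 - 1/m)^m ≤ exp(-1)
  have hfac : (0:ℝ) ≤ 1 - 1/(m:ℝ) := by
    have : (1:ℝ) ≤ (m:ℝ) := by exact_mod_cast hm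
    have h01 : 1/(m:ℝ) ≤ 1 := by
      rw [div_le_one hm0]; exact this
    linarith
  have hexp : (1 - 1/(m:ℝ))^m ≤ Real.exp (-1) := by
    have h1 : 1 - 1/(m:ℝ) ≤ Real.exp (-(1/(m:ℝ))) := by
      have := Real.add_one_le_exp (-(1/(m:ℝ)))
      linarith
    calc (1 - 1/(m:ℝ))^m ≤ (Real.exp (-(1/(m:ℝ))))^m :=
          pow_le_pow_left₀ hfac h1 m
      _ = Real.exp (-(1/(m:ℝ)) * m) := by rw [← Real.exp_nat_mul]; ring_nf
      _ = Real.exp (-1) := by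
          congr 1
          field_simp
  have hfinal : f OPT - f (S m) ≤ Real.exp (-1) * f OPT := by
    calc f OPT - f (S m) ≤ (1 - 1/(m:ℝ))^m * f OPT := hrec m
      _ ≤ Real.exp (-1) * f OPT :=
          mul_le_mul_of_nonneg_right hexp hfO
  rw [Real.exp_neg] at hfinal
  have : (1 - 1 / Real.exp 1) * f OPT = f OPT - (Real.exp 1)⁻¹ * f OPT := by
    rw [one_div]; ring
  linarith [this.le, hfinal]
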